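/- arXiv:1010.2183 — 4 statements merged into one kernel-verified Lean document; each statement's English description precedes it below -/
import Mathlib

section
/- Let P be a differentiable family of Hermitian rank-1 projectors with P e ≠ 0. Then (∂±P)·P·e = D±P·e, where D±P = ∂±P − ⟨P, ∂±P⟩·P. -/
open Matrix

/-- Entrywise partial derivative of a matrix family in the first real coordinate. -/
noncomputable def pd1 {N : ℕ} (f : ℝ × ℝ → Matrix (Fin N) (Fin N) ℂ) (p : ℝ × ℝ) :
    Matrix (Fin N) (Fin N) ℂ :=
  Matrix.of fun i j => fderiv ℝ (fun q => f q i j) p (1, 0)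

/-- Entrywise partial derivative of a matrix family in the second real coordinate. -/
noncomputable def pd2 {N : ℕ} (f : ℝ × ℝ → Matrix (Fin N) (Fin N) ℂ) (p : ℝ × ℝ) :
    Matrix (Fin N) (Fin N) ℂ :=
  Matrix.of fun i j => fderiv ℝ (fun q => f q i j) p (0, 1)

/-- `∂₊ = (∂₁ - i∂₂)/2` for matrix families. -/
noncomputable def pdp {N : ℕ} (f : ℝ × ℝ → Matrix (Fin N) (Fin N) ℂ) (p : ℝ × ℝ) :
    Matrix (Fin N) (Fin N) ℂ :=
  ((1 : ℂ) / 2) • (pd1 f p - Complex.I • pd2 f p)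

/-- `∂₋ = (∂₁ + i∂₂)/2` for matrix families. -/
noncomputable def pdm {N : ℕ} (f : ℝ × ℝ → Matrix (Fin N) (Fin N) ℂ) (p : ℝ × ℝ) :
    Matrix (Fin N) (Fin N) ℂ :=
  ((1 : ℂ) / 2) • (pd1 f p + Complex.I • pd2 f p)

/-- The sesquilinear product `⟨X,Y⟩ = (e† Xᴴ Y e)/(e† P e)`. -/
noncomputable def sesq {N : ℕ} (P : Matrix (Fin N) (Fin N) ℂ) (e : Fin N → ℂ)
    (X Y : Matrix (Fin N) (Fin N) ℂ) : ℂ :=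
  (star e ⬝ᵥ (Xᴴ * Y).mulVec e) / (star e ⬝ᵥ P.mulVec e)

/-- The covariant derivative `D₊X = ∂₊X − ⟨P,∂₊P⟩ X`. -/
noncomputable def Dp {N : ℕ} (P : ℝ × ℝ → Matrix (Fin N) (Fin N) ℂ) (e : Fin N → ℂ)
    (X : ℝ × ℝ → Matrix (Fin N) (Fin N) ℂ) (p : ℝ × ℝ) : Matrix (Fin N) (Fin N) ℂ :=
  pdp X p - sesq (P p) e (P p) (pdp P p) • X p

/-- The covariant derivative `D₋X = ∂₋X − ⟨P,∂₋P⟩ X`. -/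
noncomputable def Dm {N : ℕ} (P : ℝ × ℝ → Matrix (Fin N) (Fin N) ℂ) (e : Fin N → ℂ)
    (X : ℝ × ℝ → Matrix (Fin N) (Fin N) ℂ) (p : ℝ × ℝ) : Matrix (Fin N) (Fin N) ℂ :=
  pdm X p - sesq (P p) e (P p) (pdm P p) • X p

/-- Leibniz rule for a directional entrywise derivative of an idempotent family. -/
lemma leibniz_dir {N : ℕ} (P : ℝ × ℝ → Matrix (Fin N) (Fin N) ℂ)
    (hdiff : ∀ i j, Differentiable ℝ fun q => P q i j)
    (hidem : ∀ p, P p * P p = P p) (p : ℝ × ℝ) (v : ℝ × ℝ) :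
    (Matrix.of fun i j => fderiv ℝ (fun q => P q i j) p v) =
      P p * (Matrix.of fun i j => fderiv ℝ (fun q => P q i j) p v) +
      (Matrix.of fun i j => fderiv ℝ (fun q => P q i j) p v) * P p := by
  ext i j
  have h1 : (fun q => P q i j) = fun q => ∑ k, P q i k * P q k j := by
    funext q
    conv_lhs => rw [← hidem q]
    rw [Matrix.mul_apply]
  have h2 : fderiv ℝ (fun q => P q i j) p =
      ∑ k, fderiv ℝ (fun q => P q i k * P q k j) p := by
    rw [h1]
    exact fderiv_fun_sum fun k _ => ((hdiff i k) p).mul ((hdiff k j) p)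
  have h3 : ∀ k, fderiv ℝ (fun q => P q i k * P q k j) p =
      P p i k • fderiv ℝ (fun q => P q k j) p + P p k j • fderiv ℝ (fun q => P q i k) p :=
    fun k => fderiv_mul ((hdiff i k) p) ((hdiff k j) p)
  simp only [Matrix.of_apply, Matrix.add_apply, Matrix.mul_apply, h2]
  simp only [ContinuousLinearMap.coe_sum', Finset.sum_apply, h3,
    ContinuousLinearMap.add_apply, ContinuousLinearMap.coe_smul', Pi.smul_apply,
    smul_eq_mul, Finset.sum_add_distrib]
  congr 1
  exact Finset.sum_congr rfl fun k _ => mul_comm _ _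

lemma leibniz_pdp {N : ℕ} (P : ℝ × ℝ → Matrix (Fin N) (Fin N) ℂ)
    (hdiff : ∀ i j, Differentiable ℝ fun q => P q i j)
    (hidem : ∀ p, P p * P p = P p) (p : ℝ × ℝ) :
    pdp P p = P p * pdp P p + pdp P p * P p := by
  have h1 : pd1 P p = P p * pd1 P p + pd1 P p * P p := leibniz_dir P hdiff hidem p (1, 0)
  have h2 : pd2 P p = P p * pd2 P p + pd2 P p * P p := leibniz_dir P hdiff hidem p (0, 1)
  unfold pdp
  simp only [smul_sub, Matrix.mul_smul, Matrix.smul_mul, mul_sub, sub_mul]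
  conv_lhs => rw [h1, h2]
  simp only [mul_add, add_mul, smul_add, smul_sub, Matrix.mul_smul, Matrix.smul_mul]
  abel

lemma leibniz_pdm {N : ℕ} (P : ℝ × ℝ → Matrix (Fin N) (Fin N) ℂ)
    (hdiff : ∀ i j, Differentiable ℝ fun q => P q i j)
    (hidem : ∀ p, P p * P p = P p) (p : ℝ × ℝ) :
    pdm P p = P p * pdm P p + pdm P p * P p := by
  have h1 : pd1 P p = P p * pd1 P p + pd1 P p * P p := leibniz_dir P hdiff hidem p (1, 0)
  have h2 : pd2 P p = P p * pd2 P p + pd2 P p * P p := leibniz_dir P hdiff hidem p (0, 1)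
  unfold pdm
  simp only [smul_add, Matrix.mul_smul, Matrix.smul_mul, mul_add, add_mul]
  conv_lhs => rw [h1, h2]
  simp only [mul_add, add_mul, smul_add, Matrix.mul_smul, Matrix.smul_mul]
  abel

/-- A Hermitian idempotent of trace one is the explicit rank-one projector onto `ψ = A e`. -/
lemma rank_one_structure {N : ℕ} (A : Matrix (Fin N) (Fin N) ℂ) (e : Fin N → ℂ)
    (hA : A * A = A) (hAh : Aᴴ = A) (htr : Matrix.trace A = 1) (hψ : A.mulVec e ≠ 0) :
    A = (star (A.mulVec e) ⬝ᵥ A.mulVec e)⁻¹ •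
      Matrix.of (fun i j => A.mulVec e i * starRingEnd ℂ (A.mulVec e j)) := by
  set ψ := A.mulVec e with hψdef
  set c : ℂ := star ψ ⬝ᵥ ψ with hc
  have hcsum : c = ∑ i, (Complex.normSq (ψ i) : ℂ) := by
    simp [hc, dotProduct, mul_comm, Complex.mul_conj]
  have hc0 : c ≠ 0 := by
    intro h
    apply hψ
    have hsum : (∑ i, Complex.normSq (ψ i)) = 0 := by
      have h' : ((∑ i, Complex.normSq (ψ i) : ℝ) : ℂ) = 0 := by
        push_cast
        rw [← hcsum]; exact h
      exact_mod_cast h'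
    funext i
    have hnn : ∀ j ∈ Finset.univ, (0:ℝ) ≤ Complex.normSq (ψ j) :=
      fun j _ => Complex.normSq_nonneg _
    have hi := (Finset.sum_eq_zero_iff_of_nonneg hnn).mp hsum i (Finset.mem_univ i)
    simpa using Complex.normSq_eq_zero.mp hi
  have hcconj : starRingEnd ℂ c = c := by
    rw [hcsum]
    simp [map_sum]
  have hAψ : A.mulVec ψ = ψ := by
    rw [hψdef, Matrix.mulVec_mulVec, hA]
  have hψA : ∀ j, (∑ k, starRingEnd ℂ (ψ k) * A k j) = starRingEnd ℂ (ψ j) := by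
    intro j
    have : (∑ k, starRingEnd ℂ (ψ k) * A k j) = starRingEnd ℂ (∑ k, ψ k * starRingEnd ℂ (A k j)) := by
      simp [map_sum]
    rw [this]
    congr 1
    have hconjA : ∀ k j, starRingEnd ℂ (A k j) = A j k := by
      intro k j
      conv_rhs => rw [← hAh]
      simp [Matrix.conjTranspose_apply]
    calc (∑ k, ψ k * starRingEnd ℂ (A k j)) = ∑ k, A j k * ψ k := by
          simp_rw [hconjA]; exact Finset.sum_congr rfl fun k _ => mul_comm _ _
      _ = (A.mulVec ψ) j := by simp [Matrix.mulVec, dotProduct]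
      _ = ψ j := by rw [hAψ]
  -- The rank-one candidate
  set R : Matrix (Fin N) (Fin N) ℂ := Matrix.of (fun i j => ψ i * starRingEnd ℂ (ψ j)) with hR
  have hAR : A * R = R := by
    ext i j
    simp only [Matrix.mul_apply, hR, Matrix.of_apply]
    calc (∑ k, A i k * (ψ k * starRingEnd ℂ (ψ j)))
        = (∑ k, A i k * ψ k) * starRingEnd ℂ (ψ j) := by
          rw [Finset.sum_mul]; exact Finset.sum_congr rfl fun k _ => by ring
      _ = ψ i * starRingEnd ℂ (ψ j) := by
          have : (∑ k, A i k * ψ k) = (A.mulVec ψ) i := by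
            simp [Matrix.mulVec, dotProduct]
          rw [this, hAψ]
  have hRA : R * A = R := by
    ext i j
    simp only [Matrix.mul_apply, hR, Matrix.of_apply]
    calc (∑ k, ψ i * starRingEnd ℂ (ψ k) * A k j)
        = ψ i * ∑ k, starRingEnd ℂ (ψ k) * A k j := by
          rw [Finset.mul_sum]; exact Finset.sum_congr rfl fun k _ => by ring
      _ = ψ i * starRingEnd ℂ (ψ j) := by rw [hψA j]
  have hRR : R * R = c • R := by
    ext i j
    simp only [Matrix.mul_apply, hR, Matrix.of_apply, Matrix.smul_apply, smul_eq_mul]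
    calc (∑ k, ψ i * starRingEnd ℂ (ψ k) * (ψ k * starRingEnd ℂ (ψ j)))
        = (∑ k, starRingEnd ℂ (ψ k) * ψ k) * (ψ i * starRingEnd ℂ (ψ j)) := by
          rw [Finset.sum_mul]; exact Finset.sum_congr rfl fun k _ => by ring
      _ = c * (ψ i * starRingEnd ℂ (ψ j)) := by
          simp [hc, dotProduct]
  have htrR : Matrix.trace R = c := by
    simp only [Matrix.trace, Matrix.diag, hR, Matrix.of_apply, hc, dotProduct]
    exact Finset.sum_congr rfl fun i _ => mul_comm _ _
  -- Q = A - c⁻¹ • R is a Hermitian idempotent of trace 0, hence 0.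
  set Q : Matrix (Fin N) (Fin N) ℂ := A - c⁻¹ • R with hQdef
  have hQ2 : Q * Q = Q := by
    rw [hQdef]
    rw [sub_mul, mul_sub, mul_sub, hA, Matrix.smul_mul, Matrix.mul_smul, Matrix.mul_smul,
      Matrix.smul_mul, hAR, hRA, hRR, smul_smul, smul_smul, mul_assoc,
      inv_mul_cancel₀ hc0, mul_one]
    abel
  have hQh : ∀ i j, Q j i = starRingEnd ℂ (Q i j) := by
    intro i j
    have hconjA : starRingEnd ℂ (A i j) = A j i := by
      conv_rhs => rw [← hAh]
      simp [Matrix.conjTranspose_apply]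
    simp only [hQdef, Matrix.sub_apply, Matrix.smul_apply, hR, Matrix.of_apply, smul_eq_mul,
      map_sub, _root_.map_mul, hcconj, map_inv₀, hconjA, Complex.conj_conj]
    ring
  have htrQ : Matrix.trace Q = 0 := by
    rw [hQdef, Matrix.trace_sub, Matrix.trace_smul, htrR, htr, smul_eq_mul,
      inv_mul_cancel₀ hc0, sub_self]
  have hQ0 : Q = 0 := by
    have h0 : (∑ i, ∑ j, Complex.normSq (Q i j)) = 0 := by
      have htr0 : Matrix.trace (Q * Q) = 0 := by rw [hQ2, htrQ]
      have h1 : Matrix.trace (Q * Q) = ∑ i, ∑ j, (Complex.normSq (Q i j) : ℂ) := by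
        simp only [Matrix.trace, Matrix.diag, Matrix.mul_apply]
        refine Finset.sum_congr rfl fun i _ => Finset.sum_congr rfl fun j _ => ?_
        rw [hQh i j, Complex.mul_conj]
      have h2 : ((∑ i, ∑ j, Complex.normSq (Q i j) : ℝ) : ℂ) = 0 := by
        push_cast
        rw [← h1]; exact htr0
      exact_mod_cast h2
    ext i j
    have hnn : ∀ a ∈ Finset.univ, (0:ℝ) ≤ ∑ b, Complex.normSq (Q a b) :=
      fun a _ => Finset.sum_nonneg fun b _ => Complex.normSq_nonneg _
    have hi := (Finset.sum_eq_zero_iff_of_nonneg hnn).mp h0 i (Finset.mem_univ i)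
    have hnn2 : ∀ b ∈ Finset.univ, (0:ℝ) ≤ Complex.normSq (Q i b) :=
      fun b _ => Complex.normSq_nonneg _
    have hij := (Finset.sum_eq_zero_iff_of_nonneg hnn2).mp hi j (Finset.mem_univ j)
    simpa using Complex.normSq_eq_zero.mp hij
  have hQ0' : A - c⁻¹ • R = 0 := by rw [← hQdef]; exact hQ0
  exact sub_eq_zero.mp hQ0'


/-- If `c = star ψ ⬝ᵥ ψ` for nonzero `ψ` then `c ≠ 0`. -/
lemma dot_self_ne_zero {N : ℕ} (ψ : Fin N → ℂ) (h : ψ ≠ 0) : star ψ ⬝ᵥ ψ ≠ 0 := by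
  have hcsum : star ψ ⬝ᵥ ψ = ∑ i, (Complex.normSq (ψ i) : ℂ) := by
    simp [dotProduct, mul_comm, Complex.mul_conj]
  intro h0
  apply h
  have hsum : (∑ i, Complex.normSq (ψ i)) = 0 := by
    have h' : ((∑ i, Complex.normSq (ψ i) : ℝ) : ℂ) = 0 := by
      push_cast
      rw [← hcsum]; exact h0
    exact_mod_cast h'
  funext i
  have hnn : ∀ j ∈ Finset.univ, (0:ℝ) ≤ Complex.normSq (ψ j) :=
    fun j _ => Complex.normSq_nonneg _
  have hi := (Finset.sum_eq_zero_iff_of_nonneg hnn).mp hsum i (Finset.mem_univ i)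
  simpa using Complex.normSq_eq_zero.mp hi

/-- The key algebraic identity: for a Hermitian trace-one idempotent `A` and any `M`
satisfying the Leibniz identity `M = A M + M A`, one has `M A e = M e - ⟨A,M⟩ A e`. -/
lemma key_identity {N : ℕ} (A M : Matrix (Fin N) (Fin N) ℂ) (e : Fin N → ℂ)
    (hA : A * A = A) (hAh : Aᴴ = A) (htr : Matrix.trace A = 1) (hψ : A.mulVec e ≠ 0)
    (hM : M = A * M + M * A) :
    (M * A).mulVec e = M.mulVec e - sesq A e A M • A.mulVec e := by
  set ψ := A.mulVec e with hψdef
  set c : ℂ := star ψ ⬝ᵥ ψ with hc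
  have hc0 : c ≠ 0 := dot_self_ne_zero ψ hψ
  have hrank : A = c⁻¹ • Matrix.of (fun i j => ψ i * starRingEnd ℂ (ψ j)) := by
    rw [hc, hψdef]; exact rank_one_structure A e hA hAh htr hψ
  have hAv : ∀ v, A.mulVec v = (c⁻¹ * (star ψ ⬝ᵥ v)) • ψ := by
    intro v
    conv_lhs => rw [hrank]
    funext i
    simp only [Matrix.mulVec, dotProduct, Matrix.smul_apply, Matrix.of_apply,
      Pi.smul_apply, smul_eq_mul, Pi.star_apply, Complex.star_def]
    rw [Finset.mul_sum, Finset.sum_mul]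
    exact Finset.sum_congr rfl fun k _ => by ring
  have hsψ : star ψ = star e ᵥ* A := by rw [hψdef, Matrix.star_mulVec, hAh]
  have hd : star e ⬝ᵥ ψ = c := by
    rw [hψdef]
    conv_lhs => rw [← hA, ← Matrix.mulVec_mulVec]
    rw [Matrix.dotProduct_mulVec, ← hsψ]
  have hnum : (Aᴴ * M).mulVec e = (c⁻¹ * (star ψ ⬝ᵥ M.mulVec e)) • ψ := by
    rw [hAh, ← Matrix.mulVec_mulVec, hAv (M.mulVec e)]
  have hsesq : sesq A e A M = c⁻¹ * (star ψ ⬝ᵥ M.mulVec e) := by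
    rw [sesq, hnum, ← hψdef, dotProduct_smul, hd, smul_eq_mul,
      mul_div_assoc, div_self hc0, mul_one]
  have hMA : M * A = M - A * M := eq_sub_of_add_eq' hM.symm
  rw [hMA, Matrix.sub_mulVec, ← Matrix.mulVec_mulVec, hAv (M.mulVec e), hsesq]

/-- For a differentiable family of Hermitian rank-1 projectors, `(∂±P)·P·e = (D±P)·e`. -/
theorem deriv_mul_proj_apply {N : ℕ} (P : ℝ × ℝ → Matrix (Fin N) (Fin N) ℂ) (e : Fin N → ℂ)
    (hdiff : ∀ i j, Differentiable ℝ fun q => P q i j)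
    (hidem : ∀ p, P p * P p = P p) (hherm : ∀ p, (P p)ᴴ = P p)
    (htr : ∀ p, Matrix.trace (P p) = 1) (he : ∀ p, (P p).mulVec e ≠ 0) :
    ∀ p : ℝ × ℝ,
      (pdp P p * P p).mulVec e = (Dp P e P p).mulVec e ∧
      (pdm P p * P p).mulVec e = (Dm P e P p).mulVec e := by
  intro p
  constructor
  · have h := key_identity (P p) (pdp P p) e (hidem p) (hherm p) (htr p) (he p)
      (leibniz_pdp P hdiff hidem p)
    rw [Dp, Matrix.sub_mulVec, Matrix.smul_mulVec]
    exact h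
  · have h := key_identity (P p) (pdm P p) e (hidem p) (hherm p) (htr p) (he p)
      (leibniz_pdm P hdiff hidem p)
    rw [Dm, Matrix.sub_mulVec, Matrix.smul_mulVec]
    exact h
end

section
/- Let P be a differentiable family of Hermitian rank-1 projectors with P e ≠ 0. Then ‖D₊P‖² = tr((∂₊P)·P·(∂₋P)) and ‖D₋P‖² = tr((∂₋P)·P·(∂₊P)), where ‖X‖² = (e† X† X e)/(e† P e). In particular these quantities are independent of the choice of e. -/
open Matrix

section AuxLemmas
open Matrix

lemma vecMulVec_mulVec' {N : ℕ} (u v x : Fin N → ℂ) :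
    vecMulVec u v *ᵥ x = (v ⬝ᵥ x) • u := by
  ext i
  simp [vecMulVec_apply, mulVec, dotProduct, Finset.mul_sum, mul_assoc]
  rw [Finset.sum_mul]
  congr 1; funext j; ring

lemma herm_dot {N : ℕ} (M Q : Matrix (Fin N) (Fin N) ℂ) (e : Fin N → ℂ) :
    star e ⬝ᵥ (Mᴴ * Q) *ᵥ e = star (M *ᵥ e) ⬝ᵥ (Q *ᵥ e) := by
  rw [← Matrix.mulVec_mulVec, Matrix.dotProduct_mulVec, Matrix.star_mulVec]

lemma trace_mul_vecMulVec {N : ℕ} (M : Matrix (Fin N) (Fin N) ℂ) (u v : Fin N → ℂ) :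
    Matrix.trace (M * vecMulVec u v) = v ⬝ᵥ (M *ᵥ u) := by
  simp [Matrix.trace, Matrix.diag, Matrix.mul_apply, vecMulVec_apply, dotProduct, mulVec,
    Finset.mul_sum]
  congr 1; funext i; congr 1; funext j; ring

lemma rank_one_decomp {N : ℕ} (P : Matrix (Fin N) (Fin N) ℂ)
    (hid : P * P = P) (hh : Pᴴ = P) (ht : Matrix.trace P = 1) :
    ∃ w : Fin N → ℂ, star w ⬝ᵥ w = 1 ∧ P = vecMulVec w (star w) := by
  have hP : P.IsHermitian := hh
  set b := hP.eigenvectorBasis with hb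
  set μ := hP.eigenvalues with hμ
  have horth : ∀ i j, star (⇑(b i)) ⬝ᵥ ⇑(b j) = if i = j then 1 else 0 := by
    intro i j
    have := orthonormal_iff_ite.mp b.orthonormal i j
    rw [EuclideanSpace.inner_eq_star_dotProduct, dotProduct_comm] at this
    exact this
  have hsq : ∀ i, μ i = 0 ∨ μ i = 1 := by
    intro i
    have h1 : P *ᵥ ⇑(b i) = (μ i : ℝ) • ⇑(b i) := hP.mulVec_eigenvectorBasis i
    have h2 : P *ᵥ (P *ᵥ ⇑(b i)) = P *ᵥ ⇑(b i) := by
      rw [Matrix.mulVec_mulVec, hid]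
    rw [h1, Matrix.mulVec_smul, h1, smul_smul] at h2
    have hbne : star (⇑(b i)) ⬝ᵥ ⇑(b i) = 1 := by simpa using horth i i
    have h3 : star (⇑(b i)) ⬝ᵥ ((μ i * μ i) • ⇑(b i)) = star (⇑(b i)) ⬝ᵥ ((μ i) • ⇑(b i)) := by
      rw [h2]
    rw [dotProduct_smul, dotProduct_smul, hbne] at h3
    have h4 : ((μ i * μ i : ℝ) : ℂ) = ((μ i : ℝ) : ℂ) := by
      simpa [smul_eq_mul] using h3
    have h5 : μ i * μ i = μ i := by exact_mod_cast h4
    rcases mul_eq_zero.mp (show μ i * (μ i - 1) = 0 by nlinarith) with h | h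
    · exact Or.inl h
    · exact Or.inr (by linarith)
  have hsum : ∑ i, μ i = 1 := by
    have hst := hP.spectral_theorem
    have h2 : Matrix.trace P = ∑ i, (μ i : ℂ) := by
      conv_lhs => rw [hst]
      rw [Unitary.conjStarAlgAut_apply, Matrix.trace_mul_cycle,
        Unitary.coe_star_mul_self hP.eigenvectorUnitary, Matrix.one_mul,
        Matrix.trace_diagonal]
      rfl
    rw [ht] at h2
    have h3 : ((∑ i, μ i : ℝ) : ℂ) = 1 := by push_cast; rw [← h2]
    exact_mod_cast h3
  have hex : ∃ i₀, μ i₀ = 1 := by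
    by_contra hno
    push_neg at hno
    have : ∀ i, μ i = 0 := fun i => (hsq i).resolve_right (hno i)
    rw [Finset.sum_congr rfl (fun i _ => this i)] at hsum
    simp at hsum
  obtain ⟨i₀, hi₀⟩ := hex
  have hzero : ∀ j, j ≠ i₀ → μ j = 0 := by
    intro j hj
    have hrest : ∑ i ∈ Finset.univ.erase i₀, μ i = 0 := by
      have := Finset.add_sum_erase Finset.univ μ (Finset.mem_univ i₀)
      rw [hsum, hi₀] at this
      linarith
    have hnn : ∀ i ∈ Finset.univ.erase i₀, 0 ≤ μ i := by
      intro i _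
      rcases hsq i with h | h <;> simp [h]
    exact (Finset.sum_eq_zero_iff_of_nonneg hnn).mp hrest j
      (Finset.mem_erase.mpr ⟨hj, Finset.mem_univ j⟩)
  refine ⟨⇑(b i₀), by simpa using horth i₀ i₀, ?_⟩
  have hact : ∀ j, P *ᵥ ⇑(b j) = vecMulVec (⇑(b i₀)) (star ⇑(b i₀)) *ᵥ ⇑(b j) := by
    intro j
    rw [hP.mulVec_eigenvectorBasis j, vecMulVec_mulVec', horth i₀ j, ← hμ, ← hb]
    by_cases hj : j = i₀
    · subst hj; rw [hi₀]; simp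
    · rw [hzero j hj, if_neg (fun h => hj h.symm)]; simp
  apply Matrix.toEuclideanLin.injective
  apply Module.Basis.ext b.toBasis
  intro j
  apply (WithLp.equiv 2 (Fin N → ℂ)).injective
  simp only [OrthonormalBasis.coe_toBasis, Matrix.toEuclideanLin_apply]
  exact hact j

noncomputable def pdv {N : ℕ} (f : ℝ × ℝ → Matrix (Fin N) (Fin N) ℂ) (p : ℝ × ℝ)
    (v : ℝ × ℝ) : Matrix (Fin N) (Fin N) ℂ :=
  Matrix.of fun i j => fderiv ℝ (fun q => f q i j) p v

lemma pd1_eq_pdv {N : ℕ} (f : ℝ × ℝ → Matrix (Fin N) (Fin N) ℂ) (p : ℝ × ℝ) :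
    pd1 f p = pdv f p (1, 0) := rfl

lemma pd2_eq_pdv {N : ℕ} (f : ℝ × ℝ → Matrix (Fin N) (Fin N) ℂ) (p : ℝ × ℝ) :
    pd2 f p = pdv f p (0, 1) := rfl

lemma pdv_idem {N : ℕ} (P : ℝ × ℝ → Matrix (Fin N) (Fin N) ℂ)
    (hdiff : ∀ i j, Differentiable ℝ fun q => P q i j)
    (hidem : ∀ p, P p * P p = P p) (p : ℝ × ℝ) (v : ℝ × ℝ) :
    pdv P p v = pdv P p v * P p + P p * pdv P p v := by
  ext i j
  have hfun : (fun q => P q i j) = fun q => ∑ k, P q i k * P q k j := by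
    funext q
    rw [← Matrix.mul_apply, hidem q]
  have hdsum : fderiv ℝ (fun q => ∑ k, P q i k * P q k j) p =
      ∑ k, fderiv ℝ (fun q => P q i k * P q k j) p := by
    apply fderiv_fun_sum
    intro k _
    exact ((hdiff i k).differentiableAt).mul ((hdiff k j).differentiableAt)
  have hterm : ∀ k, fderiv ℝ (fun q => P q i k * P q k j) p =
      P p i k • fderiv ℝ (fun q => P q k j) p + P p k j • fderiv ℝ (fun q => P q i k) p :=
    fun k => fderiv_mul ((hdiff i k).differentiableAt) ((hdiff k j).differentiableAt)
  have : fderiv ℝ (fun q => P q i j) p v = ∑ k, (P p i k * fderiv ℝ (fun q => P q k j) p v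
      + fderiv ℝ (fun q => P q i k) p v * P p k j) := by
    conv_lhs => rw [hfun, hdsum]
    rw [ContinuousLinearMap.sum_apply]
    refine Finset.sum_congr rfl fun k _ => ?_
    rw [hterm k]
    simp [smul_eq_mul, mul_comm]
  simp only [pdv, Matrix.add_apply, Matrix.mul_apply, Matrix.of_apply]
  rw [this, Finset.sum_add_distrib, add_comm]

lemma comb_idem {N : ℕ} (Q A B : Matrix (Fin N) (Fin N) ℂ) (c z : ℂ)
    (hA : A = A * Q + Q * A) (hB : B = B * Q + Q * B) :
    c • (A + z • B) = (c • (A + z • B)) * Q + Q * (c • (A + z • B)) := by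
  conv_lhs => rw [hA, hB]
  simp only [Matrix.smul_mul, Matrix.mul_smul, Matrix.add_mul, Matrix.mul_add]
  module

lemma pdp_idem {N : ℕ} (P : ℝ × ℝ → Matrix (Fin N) (Fin N) ℂ)
    (hdiff : ∀ i j, Differentiable ℝ fun q => P q i j)
    (hidem : ∀ p, P p * P p = P p) (p : ℝ × ℝ) :
    pdp P p = pdp P p * P p + P p * pdp P p := by
  have h : pdp P p = ((1:ℂ)/2) • (pdv P p (1,0) + (-Complex.I) • pdv P p (0,1)) := by
    rw [pdp, pd1_eq_pdv, pd2_eq_pdv]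
    module
  rw [h]
  exact comb_idem _ _ _ _ _ (pdv_idem P hdiff hidem p _) (pdv_idem P hdiff hidem p _)

lemma pdm_idem {N : ℕ} (P : ℝ × ℝ → Matrix (Fin N) (Fin N) ℂ)
    (hdiff : ∀ i j, Differentiable ℝ fun q => P q i j)
    (hidem : ∀ p, P p * P p = P p) (p : ℝ × ℝ) :
    pdm P p = pdm P p * P p + P p * pdm P p := by
  have h : pdm P p = ((1:ℂ)/2) • (pdv P p (1,0) + Complex.I • pdv P p (0,1)) := by
    rw [pdm, pd1_eq_pdv, pd2_eq_pdv]
  rw [h]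
  exact comb_idem _ _ _ _ _ (pdv_idem P hdiff hidem p _) (pdv_idem P hdiff hidem p _)

lemma pdv_herm {N : ℕ} (P : ℝ × ℝ → Matrix (Fin N) (Fin N) ℂ)
    (hherm : ∀ p, (P p)ᴴ = P p) (p : ℝ × ℝ) (v : ℝ × ℝ) :
    (pdv P p v)ᴴ = pdv P p v := by
  ext i j
  simp only [conjTranspose_apply, pdv, Matrix.of_apply]
  have hfun : (fun q => P q j i) = fun q => star (P q i j) := by
    funext q
    have := congrFun (congrFun (hherm q) j) i
    simp only [conjTranspose_apply] at this
    exact this.symm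
  rw [hfun, fderiv_star]
  simp

lemma pdp_conj {N : ℕ} (P : ℝ × ℝ → Matrix (Fin N) (Fin N) ℂ)
    (hherm : ∀ p, (P p)ᴴ = P p) (p : ℝ × ℝ) :
    (pdp P p)ᴴ = pdm P p := by
  rw [pdp, pdm, pd1_eq_pdv, pd2_eq_pdv]
  rw [Matrix.conjTranspose_smul, Matrix.conjTranspose_sub, Matrix.conjTranspose_smul,
    pdv_herm P hherm, pdv_herm P hherm]
  simp [Complex.conj_I, sub_neg_eq_add]

end AuxLemmas


lemma key_trace {N : ℕ} (Pm : Matrix (Fin N) (Fin N) ℂ) (w e : Fin N → ℂ)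
    (hw : star w ⬝ᵥ w = 1) (hPw : Pm = vecMulVec w (star w))
    (he : Pm *ᵥ e ≠ 0) (A : Matrix (Fin N) (Fin N) ℂ)
    (hA : A = A * Pm + Pm * A) :
    sesq Pm e (A - sesq Pm e Pm A • Pm) (A - sesq Pm e Pm A • Pm) = Matrix.trace (A * Pm * Aᴴ) := by
  set c : ℂ := star w ⬝ᵥ e with hc
  set x : Fin N → ℂ := A *ᵥ e with hx
  set z : Fin N → ℂ := A *ᵥ w with hz
  set α : ℂ := star w ⬝ᵥ x with hα
  have hPe : Pm *ᵥ e = c • w := by rw [hPw, vecMulVec_mulVec']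
  have hcne : c ≠ 0 := by
    intro h0
    apply he
    rw [hPe, h0, zero_smul]
  have hsew : star e ⬝ᵥ w = starRingEnd ℂ c := by
    rw [hc, star_dotProduct]; rfl
  have hd : star e ⬝ᵥ Pm *ᵥ e = c * starRingEnd ℂ c := by
    rw [hPe, dotProduct_smul, hsew, smul_eq_mul]
  have hdne : c * starRingEnd ℂ c ≠ 0 :=
    mul_ne_zero hcne (by simpa using hcne)
  have hxd : x = c • z + α • w := by
    have := congrArg (fun M => M *ᵥ e) hA
    rw [Matrix.add_mulVec, ← Matrix.mulVec_mulVec, ← Matrix.mulVec_mulVec, hPe,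
      Matrix.mulVec_smul] at this
    rw [hx, this, hPw, vecMulVec_mulVec']
  have hlam : sesq Pm e Pm A = starRingEnd ℂ c * α / (c * starRingEnd ℂ c) := by
    rw [sesq, herm_dot, hd, hPe, star_smul, smul_dotProduct, ← hx, ← hα]
    rfl
  have hlc : sesq Pm e Pm A * c = α := by
    rw [hlam, div_mul_eq_mul_div, div_eq_iff hdne]; ring
  have hDe : (A - sesq Pm e Pm A • Pm) *ᵥ e = c • z := by
    rw [Matrix.sub_mulVec, Matrix.smul_mulVec, hPe, smul_smul, hlc, ← hx, hxd]
    abel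
  have hRHS : Matrix.trace (A * Pm * Aᴴ) = star z ⬝ᵥ z := by
    rw [Matrix.trace_mul_cycle, hPw, trace_mul_vecMulVec,
      ← Matrix.mulVec_mulVec, Matrix.dotProduct_mulVec, ← Matrix.star_mulVec, ← hz]
  rw [sesq, herm_dot, hDe, hd, hRHS]
  rw [star_smul, smul_dotProduct, dotProduct_smul]
  rw [show star c = starRingEnd ℂ c from rfl, smul_eq_mul, smul_eq_mul, div_eq_iff hdne]
  ring

/-- Norms of the covariant derivatives of `P` as traces:
`‖D₊P‖² = tr(∂₊P · P · ∂₋P)` and `‖D₋P‖² = tr(∂₋P · P · ∂₊P)`; in particular these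
quantities do not depend on the choice of `e`. -/
theorem norm_sq_covariant_deriv {N : ℕ} (P : ℝ × ℝ → Matrix (Fin N) (Fin N) ℂ) (e : Fin N → ℂ)
    (hdiff : ∀ i j, Differentiable ℝ fun q => P q i j)
    (hidem : ∀ p, P p * P p = P p) (hherm : ∀ p, (P p)ᴴ = P p)
    (htr : ∀ p, Matrix.trace (P p) = 1) (he : ∀ p, (P p).mulVec e ≠ 0) :
    ∀ p : ℝ × ℝ,
      sesq (P p) e (Dp P e P p) (Dp P e P p) = Matrix.trace (pdp P p * P p * pdm P p) ∧
      sesq (P p) e (Dm P e P p) (Dm P e P p) = Matrix.trace (pdm P p * P p * pdp P p) := by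
  intro p
  obtain ⟨w, hw, hPw⟩ := rank_one_decomp (P p) (hidem p) (hherm p) (htr p)
  have hpc := pdp_conj P hherm p
  constructor
  · have h := key_trace (P p) w e hw hPw (he p) (pdp P p) (pdp_idem P hdiff hidem p)
    rw [Dp, ← hpc]
    exact h
  · have h := key_trace (P p) w e hw hPw (he p) (pdm P p) (pdm_idem P hdiff hidem p)
    have hmc : (pdm P p)ᴴ = pdp P p := by rw [← hpc, conjTranspose_conjTranspose]
    rw [Dm, ← hmc]
    exact h
end

section
/- Let P be a twice-differentiable family of Hermitian rank-1 projectors with P e ≠ 0. The commutator of the covariant derivatives acting on any differentiable matrix family X satisfies [D₊, D₋]X = (‖D₊P‖² − ‖D₋P‖²)·X. -/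
open Matrix

noncomputable def dd (v : ℝ × ℝ) (f : ℝ × ℝ → ℂ) (q : ℝ × ℝ) : ℂ := fderiv ℝ f q v

lemma dd_add {f g : ℝ × ℝ → ℂ} {q : ℝ × ℝ} (v : ℝ × ℝ)
    (hf : DifferentiableAt ℝ f q) (hg : DifferentiableAt ℝ g q) :
    dd v (fun x => f x + g x) q = dd v f q + dd v g q := by
  simp [dd, fderiv_fun_add hf hg]

lemma dd_sub {f g : ℝ × ℝ → ℂ} {q : ℝ × ℝ} (v : ℝ × ℝ)
    (hf : DifferentiableAt ℝ f q) (hg : DifferentiableAt ℝ g q) :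
    dd v (fun x => f x - g x) q = dd v f q - dd v g q := by
  simp [dd, fderiv_fun_sub hf hg]

lemma dd_const_mul {f : ℝ × ℝ → ℂ} {q : ℝ × ℝ} (v : ℝ × ℝ) (c : ℂ)
    (hf : DifferentiableAt ℝ f q) :
    dd v (fun x => c * f x) q = c * dd v f q := by
  rw [dd, fderiv_const_mul hf c]; simp [dd]

lemma dd_mul_const {f : ℝ × ℝ → ℂ} {q : ℝ × ℝ} (v : ℝ × ℝ) (c : ℂ)
    (hf : DifferentiableAt ℝ f q) :
    dd v (fun x => f x * c) q = dd v f q * c := by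
  rw [dd, fderiv_mul_const hf c]; simp [dd, mul_comm]

lemma dd_mul {f g : ℝ × ℝ → ℂ} {q : ℝ × ℝ} (v : ℝ × ℝ)
    (hf : DifferentiableAt ℝ f q) (hg : DifferentiableAt ℝ g q) :
    dd v (fun x => f x * g x) q = f q * dd v g q + g q * dd v f q := by
  simp [dd, fderiv_fun_mul hf hg]

lemma dd_sum {ι : Type*} {u : Finset ι} {F : ι → ℝ × ℝ → ℂ} {q : ℝ × ℝ} (v : ℝ × ℝ)
    (h : ∀ i ∈ u, DifferentiableAt ℝ (F i) q) :
    dd v (fun x => ∑ i ∈ u, F i x) q = ∑ i ∈ u, dd v (F i) q := by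
  simp [dd, fderiv_fun_sum h]

lemma dd_inv {g : ℝ × ℝ → ℂ} {q : ℝ × ℝ} (v : ℝ × ℝ)
    (hg : DifferentiableAt ℝ g q) (h0 : g q ≠ 0) :
    dd v (fun x => (g x)⁻¹) q = -(dd v g q) / g q ^ 2 := by
  have h := ((hasFDerivAt_inv' (𝕜 := ℝ) h0).comp q hg.hasFDerivAt).fderiv
  have : dd v (fun x => (g x)⁻¹) q
      = ((-ContinuousLinearMap.mulLeftRight ℝ ℂ (g q)⁻¹ (g q)⁻¹).comp (fderiv ℝ g q)) v := by
    rw [dd, show (fun x => (g x)⁻¹) = Inv.inv ∘ g from rfl, h]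
  rw [this]
  simp only [ContinuousLinearMap.comp_apply, ContinuousLinearMap.neg_apply,
    ContinuousLinearMap.mulLeftRight_apply]
  simp only [dd]
  rw [eq_div_iff (pow_ne_zero 2 h0)]
  field_simp

lemma dd_div {f g : ℝ × ℝ → ℂ} {q : ℝ × ℝ} (v : ℝ × ℝ)
    (hf : DifferentiableAt ℝ f q) (hg : DifferentiableAt ℝ g q) (h0 : g q ≠ 0) :
    dd v (fun x => f x / g x) q = (dd v f q * g q - f q * dd v g q) / g q ^ 2 := by
  have h1 : (fun x => f x / g x) = fun x => f x * (g x)⁻¹ := by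
    funext x; rw [div_eq_mul_inv]
  rw [h1, dd_mul v hf (hg.fun_inv h0), dd_inv v hg h0]
  field_simp
  ring

lemma dd_conj {f : ℝ × ℝ → ℂ} {q : ℝ × ℝ} (v : ℝ × ℝ)
    (hf : DifferentiableAt ℝ f q) :
    dd v (fun x => (starRingEnd ℂ) (f x)) q = (starRingEnd ℂ) (dd v f q) := by
  have h := ((Complex.conjCLE.toContinuousLinearMap).hasFDerivAt.comp q hf.hasFDerivAt).fderiv
  have h2 : dd v (fun x => (starRingEnd ℂ) (f x)) q
      = ((Complex.conjCLE.toContinuousLinearMap).comp (fderiv ℝ f q)) v := by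
    rw [dd, show (fun x => (starRingEnd ℂ) (f x)) = (Complex.conjCLE.toContinuousLinearMap) ∘ f from rfl, h]
  rw [h2]
  simp [dd]

lemma diff_dd {f : ℝ × ℝ → ℂ} (hf : ContDiff ℝ 2 f) (v : ℝ × ℝ) :
    Differentiable ℝ (dd v f) := by
  have h1 : ContDiff ℝ 1 (fun q => fderiv ℝ f q) := hf.fderiv_right (by norm_num)
  have h2 : ContDiff ℝ 1 (fun q => fderiv ℝ f q v) := h1.clm_apply contDiff_const
  exact h2.differentiable (by norm_num)

lemma dd_comm {f : ℝ × ℝ → ℂ} (hf : ContDiff ℝ 2 f) (q v w : ℝ × ℝ) :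
    dd w (dd v f) q = dd v (dd w f) q := by
  have hdf : DifferentiableAt ℝ (fderiv ℝ f) q :=
    ((hf.fderiv_right (by norm_num : (1:WithTop ℕ∞) + 1 ≤ 2)).differentiable (by norm_num)) q
  have key : ∀ u : ℝ × ℝ, fderiv ℝ (fun x => fderiv ℝ f x u) q
      = (ContinuousLinearMap.apply ℝ ℂ u).comp (fderiv ℝ (fderiv ℝ f) q) := by
    intro u
    rw [show (fun x => fderiv ℝ f x u) = (ContinuousLinearMap.apply ℝ ℂ u) ∘ (fderiv ℝ f) from rfl]
    rw [fderiv_comp q (ContinuousLinearMap.apply ℝ ℂ u).differentiableAt hdf,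
      ContinuousLinearMap.fderiv]
  have hsym : IsSymmSndFDerivAt ℝ f q := hf.contDiffAt.isSymmSndFDerivAt (by norm_num)
  show fderiv ℝ (fun x => fderiv ℝ f x v) q w = fderiv ℝ (fun x => fderiv ℝ f x w) q v
  rw [key v, key w]
  simpa using hsym w v
noncomputable def dpS (f : ℝ × ℝ → ℂ) (q : ℝ × ℝ) : ℂ :=
  (1 / 2 : ℂ) * (dd (1, 0) f q - Complex.I * dd (0, 1) f q)

noncomputable def dmS (f : ℝ × ℝ → ℂ) (q : ℝ × ℝ) : ℂ :=
  (1 / 2 : ℂ) * (dd (1, 0) f q + Complex.I * dd (0, 1) f q)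

lemma diff_dpS {f : ℝ × ℝ → ℂ} (hf : ContDiff ℝ 2 f) : Differentiable ℝ (dpS f) := by
  have := (((diff_dd hf (1, 0)).sub ((diff_dd hf (0, 1)).const_mul Complex.I)).const_mul
    ((1 : ℂ) / 2))
  exact this

lemma diff_dmS {f : ℝ × ℝ → ℂ} (hf : ContDiff ℝ 2 f) : Differentiable ℝ (dmS f) := by
  have := (((diff_dd hf (1, 0)).add ((diff_dd hf (0, 1)).const_mul Complex.I)).const_mul
    ((1 : ℂ) / 2))
  exact this

lemma dd_dpS {f : ℝ × ℝ → ℂ} (hf : ContDiff ℝ 2 f) (q w : ℝ × ℝ) :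
    dd w (dpS f) q = dpS (dd w f) q := by
  have h1 : dpS f = fun x =>
      (1 / 2 : ℂ) * (dd (1, 0) f x - Complex.I * dd (0, 1) f x) := rfl
  rw [h1, dd_const_mul w _ (((diff_dd hf (1, 0)).fun_sub
      ((diff_dd hf (0, 1)).const_mul Complex.I)) q),
    dd_sub w ((diff_dd hf (1, 0)) q) (((diff_dd hf (0, 1)).const_mul Complex.I) q),
    dd_const_mul w _ ((diff_dd hf (0, 1)) q),
    dd_comm hf q (1, 0) w, dd_comm hf q (0, 1) w]
  rfl

lemma dd_dmS {f : ℝ × ℝ → ℂ} (hf : ContDiff ℝ 2 f) (q w : ℝ × ℝ) :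
    dd w (dmS f) q = dmS (dd w f) q := by
  have h1 : dmS f = fun x =>
      (1 / 2 : ℂ) * (dd (1, 0) f x + Complex.I * dd (0, 1) f x) := rfl
  rw [h1, dd_const_mul w _ (((diff_dd hf (1, 0)).fun_add
      ((diff_dd hf (0, 1)).const_mul Complex.I)) q),
    dd_add w ((diff_dd hf (1, 0)) q) (((diff_dd hf (0, 1)).const_mul Complex.I) q),
    dd_const_mul w _ ((diff_dd hf (0, 1)) q),
    dd_comm hf q (1, 0) w, dd_comm hf q (0, 1) w]
  rfl

lemma dpS_dmS_comm {f : ℝ × ℝ → ℂ} (hf : ContDiff ℝ 2 f) (q : ℝ × ℝ) :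
    dpS (dmS f) q = dmS (dpS f) q := by
  show (1 / 2 : ℂ) * (dd (1, 0) (dmS f) q - Complex.I * dd (0, 1) (dmS f) q)
    = (1 / 2 : ℂ) * (dd (1, 0) (dpS f) q + Complex.I * dd (0, 1) (dpS f) q)
  rw [dd_dmS hf q (1, 0), dd_dmS hf q (0, 1), dd_dpS hf q (1, 0), dd_dpS hf q (0, 1)]
  show (1 / 2 : ℂ) * ((1 / 2 : ℂ) * (dd (1, 0) (dd (1, 0) f) q
        + Complex.I * dd (0, 1) (dd (1, 0) f) q)
      - Complex.I * ((1 / 2 : ℂ) * (dd (1, 0) (dd (0, 1) f) q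
        + Complex.I * dd (0, 1) (dd (0, 1) f) q)))
    = (1 / 2 : ℂ) * ((1 / 2 : ℂ) * (dd (1, 0) (dd (1, 0) f) q
        - Complex.I * dd (0, 1) (dd (1, 0) f) q)
      + Complex.I * ((1 / 2 : ℂ) * (dd (1, 0) (dd (0, 1) f) q
        - Complex.I * dd (0, 1) (dd (0, 1) f) q)))
  rw [dd_comm hf q (1, 0) (0, 1)]
  ring

lemma dpS_sub {f g : ℝ × ℝ → ℂ} {q : ℝ × ℝ} (hf : DifferentiableAt ℝ f q)
    (hg : DifferentiableAt ℝ g q) :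
    dpS (fun x => f x - g x) q = dpS f q - dpS g q := by
  unfold dpS; rw [dd_sub _ hf hg, dd_sub _ hf hg]; ring

lemma dmS_sub {f g : ℝ × ℝ → ℂ} {q : ℝ × ℝ} (hf : DifferentiableAt ℝ f q)
    (hg : DifferentiableAt ℝ g q) :
    dmS (fun x => f x - g x) q = dmS f q - dmS g q := by
  unfold dmS; rw [dd_sub _ hf hg, dd_sub _ hf hg]; ring

lemma dpS_mul {f g : ℝ × ℝ → ℂ} {q : ℝ × ℝ} (hf : DifferentiableAt ℝ f q)
    (hg : DifferentiableAt ℝ g q) :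
    dpS (fun x => f x * g x) q = f q * dpS g q + g q * dpS f q := by
  unfold dpS; rw [dd_mul _ hf hg, dd_mul _ hf hg]; ring

lemma dmS_mul {f g : ℝ × ℝ → ℂ} {q : ℝ × ℝ} (hf : DifferentiableAt ℝ f q)
    (hg : DifferentiableAt ℝ g q) :
    dmS (fun x => f x * g x) q = f q * dmS g q + g q * dmS f q := by
  unfold dmS; rw [dd_mul _ hf hg, dd_mul _ hf hg]; ring

lemma dpS_sum {ι : Type*} {u : Finset ι} {F : ι → ℝ × ℝ → ℂ} {q : ℝ × ℝ}
    (h : ∀ i ∈ u, DifferentiableAt ℝ (F i) q) :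
    dpS (fun x => ∑ i ∈ u, F i x) q = ∑ i ∈ u, dpS (F i) q := by
  unfold dpS; rw [dd_sum _ h, dd_sum _ h]
  simp [Finset.mul_sum, Finset.sum_sub_distrib, mul_sub]

lemma dmS_sum {ι : Type*} {u : Finset ι} {F : ι → ℝ × ℝ → ℂ} {q : ℝ × ℝ}
    (h : ∀ i ∈ u, DifferentiableAt ℝ (F i) q) :
    dmS (fun x => ∑ i ∈ u, F i x) q = ∑ i ∈ u, dmS (F i) q := by
  unfold dmS; rw [dd_sum _ h, dd_sum _ h]
  simp [Finset.mul_sum, Finset.sum_add_distrib, mul_add]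

lemma dpS_div {f g : ℝ × ℝ → ℂ} {q : ℝ × ℝ} (hf : DifferentiableAt ℝ f q)
    (hg : DifferentiableAt ℝ g q) (h0 : g q ≠ 0) :
    dpS (fun x => f x / g x) q = (dpS f q * g q - f q * dpS g q) / g q ^ 2 := by
  unfold dpS; rw [dd_div _ hf hg h0, dd_div _ hf hg h0]; field_simp; ring

lemma dmS_div {f g : ℝ × ℝ → ℂ} {q : ℝ × ℝ} (hf : DifferentiableAt ℝ f q)
    (hg : DifferentiableAt ℝ g q) (h0 : g q ≠ 0) :
    dmS (fun x => f x / g x) q = (dmS f q * g q - f q * dmS g q) / g q ^ 2 := by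
  unfold dmS; rw [dd_div _ hf hg h0, dd_div _ hf hg h0]; field_simp; ring

lemma dpS_conj {f : ℝ × ℝ → ℂ} {q : ℝ × ℝ} (hf : DifferentiableAt ℝ f q) :
    (starRingEnd ℂ) (dpS f q) = dmS (fun x => (starRingEnd ℂ) (f x)) q := by
  unfold dpS dmS
  rw [dd_conj _ hf, dd_conj _ hf]
  rw [_root_.map_mul, map_sub, _root_.map_mul, Complex.conj_I]
  have h2 : (starRingEnd ℂ) (1 / 2) = 1 / 2 := by
    rw [map_div₀, _root_.map_one, Complex.conj_ofNat]
  rw [h2]; ring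
noncomputable def Phi {N : ℕ} (e : Fin N → ℂ) (M : Matrix (Fin N) (Fin N) ℂ) : ℂ :=
  star e ⬝ᵥ M.mulVec e

lemma Phi_sum_form {N : ℕ} (e : Fin N → ℂ) (M : Matrix (Fin N) (Fin N) ℂ) :
    Phi e M = ∑ i, ∑ j, star (e i) * M i j * e j := by
  simp [Phi, dotProduct, Matrix.mulVec, Finset.mul_sum, mul_assoc]

lemma Phi_add {N : ℕ} (e : Fin N → ℂ) (M M' : Matrix (Fin N) (Fin N) ℂ) :
    Phi e (M + M') = Phi e M + Phi e M' := by
  simp [Phi_sum_form, Matrix.add_apply, mul_add, add_mul, Finset.sum_add_distrib]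

lemma Phi_sub {N : ℕ} (e : Fin N → ℂ) (M M' : Matrix (Fin N) (Fin N) ℂ) :
    Phi e (M - M') = Phi e M - Phi e M' := by
  simp [Phi_sum_form, Matrix.sub_apply, mul_sub, sub_mul, Finset.sum_sub_distrib]

lemma Phi_smul {N : ℕ} (e : Fin N → ℂ) (c : ℂ) (M : Matrix (Fin N) (Fin N) ℂ) :
    Phi e (c • M) = c * Phi e M := by
  simp [Phi_sum_form, Matrix.smul_apply, Finset.mul_sum, smul_eq_mul]; congr 1
  funext i; congr 1; funext j; ring

lemma Phi_conj {N : ℕ} (e : Fin N → ℂ) (M : Matrix (Fin N) (Fin N) ℂ) :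
    (starRingEnd ℂ) (Phi e M) = Phi e Mᴴ := by
  simp [Phi_sum_form, map_sum, Matrix.conjTranspose_apply]
  rw [Finset.sum_comm]
  congr 1; funext i; congr 1; funext j
  simp [mul_comm, mul_assoc, mul_left_comm]

lemma Phi_ne_zero {N : ℕ} (e : Fin N → ℂ) (Q : Matrix (Fin N) (Fin N) ℂ)
    (hid : Q * Q = Q) (hh : Qᴴ = Q) (he : Q.mulVec e ≠ 0) : Phi e Q ≠ 0 := by
  have h1 : Q = Qᴴ * Q := by rw [hh, hid]
  have h2 : Phi e Q = star (Q.mulVec e) ⬝ᵥ (Q.mulVec e) := by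
    rw [Phi]
    conv_lhs => rw [h1]
    rw [← Matrix.mulVec_mulVec, Matrix.dotProduct_mulVec, ← Matrix.star_mulVec]
  rw [h2]
  intro hc
  have h3 : ∀ i, Q.mulVec e i = 0 := by
    have hsum : ∑ j, (Complex.normSq (Q.mulVec e j) : ℂ) = 0 := by
      rw [dotProduct] at hc
      rw [← hc]
      refine Finset.sum_congr rfl fun j _ => ?_
      simp [Complex.normSq_eq_conj_mul_self]
    have hsum' : ∑ j, Complex.normSq (Q.mulVec e j) = 0 := by exact_mod_cast hsum
    intro i
    have := (Finset.sum_eq_zero_iff_of_nonneg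
      (fun j _ => Complex.normSq_nonneg _)).mp hsum' i (Finset.mem_univ i)
    exact Complex.normSq_eq_zero.mp this
  exact he (funext h3)

lemma diff_Phi_app {N : ℕ} (e : Fin N → ℂ) (A : ℝ × ℝ → Matrix (Fin N) (Fin N) ℂ)
    (q : ℝ × ℝ) (hA : ∀ i j, DifferentiableAt ℝ (fun x => A x i j) q) :
    DifferentiableAt ℝ (fun x => Phi e (A x)) q := by
  have h1 : (fun x => Phi e (A x)) = fun x => ∑ i, ∑ j, star (e i) * A x i j * e j := by
    funext x; rw [Phi_sum_form]
  rw [h1]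
  exact DifferentiableAt.fun_sum fun i _ => DifferentiableAt.fun_sum fun j _ =>
    (((hA i j).const_mul _).mul_const _)

lemma dd_Phi {N : ℕ} (e : Fin N → ℂ) (A : ℝ × ℝ → Matrix (Fin N) (Fin N) ℂ)
    (q v : ℝ × ℝ) (hA : ∀ i j, DifferentiableAt ℝ (fun x => A x i j) q) :
    dd v (fun x => Phi e (A x)) q
      = Phi e (Matrix.of fun i j => dd v (fun x => A x i j) q) := by
  have h1 : (fun x => Phi e (A x)) = fun x => ∑ i, ∑ j, star (e i) * A x i j * e j := by
    funext x; rw [Phi_sum_form]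
  rw [h1, dd_sum v (fun i _ => DifferentiableAt.fun_sum fun j _ =>
    ((hA i j).const_mul _).mul_const _), Phi_sum_form]
  refine Finset.sum_congr rfl fun i _ => ?_
  rw [dd_sum v (fun j _ => ((hA i j).const_mul _).mul_const _)]
  refine Finset.sum_congr rfl fun j _ => ?_
  rw [dd_mul_const v _ ((hA i j).const_mul _), dd_const_mul v _ (hA i j)]
  simp [Matrix.of_apply]

lemma dd_Phi_mul {N : ℕ} (e : Fin N → ℂ) (A B : ℝ × ℝ → Matrix (Fin N) (Fin N) ℂ)
    (q v : ℝ × ℝ) (hA : ∀ i j, DifferentiableAt ℝ (fun x => A x i j) q)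
    (hB : ∀ i j, DifferentiableAt ℝ (fun x => B x i j) q) :
    dd v (fun x => Phi e (A x * B x)) q
      = Phi e ((Matrix.of fun i j => dd v (fun x => A x i j) q) * B q
          + A q * (Matrix.of fun i j => dd v (fun x => B x i j) q)) := by
  have h1 : (fun x => Phi e (A x * B x))
      = fun x => ∑ i, ∑ j, ∑ k, (star (e i) * A x i k) * (B x k j * e j) := by
    funext x; rw [Phi_sum_form]
    refine Finset.sum_congr rfl fun i _ => Finset.sum_congr rfl fun j _ => ?_
    rw [Matrix.mul_apply, Finset.mul_sum, Finset.sum_mul]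
    exact Finset.sum_congr rfl fun k _ => by ring
  rw [h1, dd_sum v (fun i _ => DifferentiableAt.fun_sum fun j _ => DifferentiableAt.fun_sum
      fun k _ => ((hA i k).const_mul _).fun_mul ((hB k j).mul_const _)),
    Phi_add, Phi_sum_form, Phi_sum_form, ← Finset.sum_add_distrib]
  refine Finset.sum_congr rfl fun i _ => ?_
  rw [dd_sum v (fun j _ => DifferentiableAt.fun_sum
      fun k _ => ((hA i k).const_mul _).fun_mul ((hB k j).mul_const _)),
    ← Finset.sum_add_distrib]
  refine Finset.sum_congr rfl fun j _ => ?_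
  rw [dd_sum v (fun k _ => ((hA i k).const_mul _).fun_mul ((hB k j).mul_const _))]
  simp only [Matrix.mul_apply, Finset.mul_sum, Finset.sum_mul]
  rw [← Finset.sum_add_distrib]
  refine Finset.sum_congr rfl fun k _ => ?_
  rw [dd_mul v ((hA i k).const_mul _) ((hB k j).mul_const _),
    dd_const_mul v _ (hA i k), dd_mul_const v _ (hB k j)]
  simp only [Matrix.of_apply]
  ring
lemma pdp_apply {N : ℕ} (f : ℝ × ℝ → Matrix (Fin N) (Fin N) ℂ) (p : ℝ × ℝ) (i j : Fin N) :
    pdp f p i j = dpS (fun q => f q i j) p := by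
  simp [pdp, pd1, pd2, dpS, dd, Matrix.smul_apply, Matrix.sub_apply, smul_eq_mul]

lemma pdm_apply {N : ℕ} (f : ℝ × ℝ → Matrix (Fin N) (Fin N) ℂ) (p : ℝ × ℝ) (i j : Fin N) :
    pdm f p i j = dmS (fun q => f q i j) p := by
  simp [pdm, pd1, pd2, dmS, dd, Matrix.smul_apply, Matrix.add_apply, smul_eq_mul]

section Main

variable {N : ℕ} (P : ℝ × ℝ → Matrix (Fin N) (Fin N) ℂ) (e : Fin N → ℂ)

lemma coefP_fun_eq (hherm : ∀ p, (P p)ᴴ = P p) :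
    (fun q => sesq (P q) e (P q) (pdp P q))
      = fun q => Phi e (P q * pdp P q) / Phi e (P q) := by
  funext q; rw [sesq, hherm q]; rfl

lemma coefM_fun_eq (hherm : ∀ p, (P p)ᴴ = P p) :
    (fun q => sesq (P q) e (P q) (pdm P q))
      = fun q => Phi e (P q * pdm P q) / Phi e (P q) := by
  funext q; rw [sesq, hherm q]; rfl

variable (hPdiff : ∀ i j, ContDiff ℝ 2 fun q => P q i j)
  (hidem : ∀ p, P p * P p = P p) (hherm : ∀ p, (P p)ᴴ = P p)
  (he : ∀ p, (P p).mulVec e ≠ 0)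

include hPdiff in
lemma hPdA : ∀ (q : ℝ × ℝ) (i j : Fin N), DifferentiableAt ℝ (fun x => P x i j) q :=
  fun q i j => ((hPdiff i j).differentiable (by norm_num)).differentiableAt

include hPdiff in
lemma hQpD : ∀ (q : ℝ × ℝ) (k j : Fin N), DifferentiableAt ℝ (fun x => pdp P x k j) q := by
  intro q k j
  have h : (fun x => pdp P x k j) = dpS (fun y => P y k j) := by
    funext x; rw [pdp_apply]
  rw [h]; exact diff_dpS (hPdiff k j) q

include hPdiff in
lemma hQmD : ∀ (q : ℝ × ℝ) (k j : Fin N), DifferentiableAt ℝ (fun x => pdm P x k j) q := by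
  intro q k j
  have h : (fun x => pdm P x k j) = dmS (fun y => P y k j) := by
    funext x; rw [pdm_apply]
  rw [h]; exact diff_dmS (hPdiff k j) q

include hPdiff in
lemma hsfD : ∀ q : ℝ × ℝ, DifferentiableAt ℝ (fun x => Phi e (P x)) q :=
  fun q => diff_Phi_app e P q (hPdA P hPdiff q)

include hidem hherm he in
lemma hsf0 : ∀ q : ℝ × ℝ, Phi e (P q) ≠ 0 :=
  fun q => Phi_ne_zero e (P q) (hidem q) (hherm q) (he q)

include hPdiff in
lemma hFpD : ∀ q : ℝ × ℝ, DifferentiableAt ℝ (fun x => Phi e (P x * pdp P x)) q := by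
  intro q
  apply diff_Phi_app
  intro i j
  have h : (fun x => (P x * pdp P x) i j) = fun x => ∑ k, P x i k * pdp P x k j := by
    funext x; rw [Matrix.mul_apply]
  rw [h]
  exact DifferentiableAt.fun_sum fun k _ => (hPdA P hPdiff q i k).fun_mul (hQpD P hPdiff q k j)

include hPdiff in
lemma hFmD : ∀ q : ℝ × ℝ, DifferentiableAt ℝ (fun x => Phi e (P x * pdm P x)) q := by
  intro q
  apply diff_Phi_app
  intro i j
  have h : (fun x => (P x * pdm P x) i j) = fun x => ∑ k, P x i k * pdm P x k j := by
    funext x; rw [Matrix.mul_apply]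
  rw [h]
  exact DifferentiableAt.fun_sum fun k _ => (hPdA P hPdiff q i k).fun_mul (hQmD P hPdiff q k j)

include hPdiff hidem hherm he in
lemma hcPD : ∀ q : ℝ × ℝ,
    DifferentiableAt ℝ (fun x => sesq (P x) e (P x) (pdp P x)) q := by
  intro q
  rw [coefP_fun_eq P e hherm]
  have h2 : (fun x => Phi e (P x * pdp P x) / Phi e (P x))
      = fun x => Phi e (P x * pdp P x) * (Phi e (P x))⁻¹ := by
    funext x; rw [div_eq_mul_inv]
  rw [h2]
  exact (hFpD P e hPdiff q).mul
    ((hsfD P e hPdiff q).inv (hsf0 P e hidem hherm he q))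

include hPdiff hidem hherm he in
lemma hcMD : ∀ q : ℝ × ℝ,
    DifferentiableAt ℝ (fun x => sesq (P x) e (P x) (pdm P x)) q := by
  intro q
  rw [coefM_fun_eq P e hherm]
  have h2 : (fun x => Phi e (P x * pdm P x) / Phi e (P x))
      = fun x => Phi e (P x * pdm P x) * (Phi e (P x))⁻¹ := by
    funext x; rw [div_eq_mul_inv]
  rw [h2]
  exact (hFmD P e hPdiff q).mul
    ((hsfD P e hPdiff q).inv (hsf0 P e hidem hherm he q))

end Main
lemma key_lemma {N : ℕ} (P : ℝ × ℝ → Matrix (Fin N) (Fin N) ℂ) (e : Fin N → ℂ)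
    (hPdiff : ∀ i j, ContDiff ℝ 2 fun q => P q i j)
    (hidem : ∀ p, P p * P p = P p) (hherm : ∀ p, (P p)ᴴ = P p)
    (he : ∀ p, (P p).mulVec e ≠ 0) (p : ℝ × ℝ) :
    dmS (fun q => sesq (P q) e (P q) (pdp P q)) p
      - dpS (fun q => sesq (P q) e (P q) (pdm P q)) p
    = sesq (P p) e (Dp P e P p) (Dp P e P p)
      - sesq (P p) e (Dm P e P p) (Dm P e P p) := by
  have hPd := hPdA P hPdiff
  have hQpd := hQpD P hPdiff
  have hQmd := hQmD P hPdiff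
  have hsf := hsfD P e hPdiff
  have hs0 := hsf0 P e hidem hherm he
  have hFp := hFpD P e hPdiff
  have hFm := hFmD P e hPdiff
  -- (e) derivatives of the denominator
  have hsm : dmS (fun q => Phi e (P q)) p = Phi e (pdm P p) := by
    show (1/2 : ℂ) * (dd (1,0) (fun q => Phi e (P q)) p
        + Complex.I * dd (0,1) (fun q => Phi e (P q)) p) = _
    rw [dd_Phi e P p (1,0) (hPd p), dd_Phi e P p (0,1) (hPd p)]
    show (1/2 : ℂ) * (Phi e (pd1 P p) + Complex.I * Phi e (pd2 P p)) = _
    rw [pdm, Phi_smul, Phi_add, Phi_smul]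
  have hsp : dpS (fun q => Phi e (P q)) p = Phi e (pdp P p) := by
    show (1/2 : ℂ) * (dd (1,0) (fun q => Phi e (P q)) p
        - Complex.I * dd (0,1) (fun q => Phi e (P q)) p) = _
    rw [dd_Phi e P p (1,0) (hPd p), dd_Phi e P p (0,1) (hPd p)]
    show (1/2 : ℂ) * (Phi e (pd1 P p) - Complex.I * Phi e (pd2 P p)) = _
    rw [pdp, Phi_smul, Phi_sub, Phi_smul]
  -- mixed second derivative matrix is common
  have hmixEq : (Matrix.of fun k j => dmS (fun x => pdp P x k j) p)
      = (Matrix.of fun k j => dpS (fun x => pdm P x k j) p) := by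
    ext k j
    simp only [Matrix.of_apply]
    have h1 : (fun x => pdp P x k j) = dpS (fun y => P y k j) := by
      funext x; rw [pdp_apply]
    have h2 : (fun x => pdm P x k j) = dmS (fun y => P y k j) := by
      funext x; rw [pdm_apply]
    rw [h1, h2, dpS_dmS_comm (hPdiff k j) p]
  -- (f) derivatives of the numerators
  have hFm' : dmS (fun q => Phi e (P q * pdp P q)) p
      = Phi e (pdm P p * pdp P p)
        + Phi e (P p * (Matrix.of fun k j => dmS (fun x => pdp P x k j) p)) := by
    show (1/2 : ℂ) * (dd (1,0) (fun q => Phi e (P q * pdp P q)) p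
        + Complex.I * dd (0,1) (fun q => Phi e (P q * pdp P q)) p) = _
    rw [dd_Phi_mul e P (pdp P) p (1,0) (hPd p) (hQpd p),
      dd_Phi_mul e P (pdp P) p (0,1) (hPd p) (hQpd p)]
    have e1 : (Matrix.of fun i j => dd (1,0) (fun x => P x i j) p) = pd1 P p := rfl
    have e2 : (Matrix.of fun i j => dd (0,1) (fun x => P x i j) p) = pd2 P p := rfl
    rw [e1, e2]
    have hM : (Matrix.of fun k j => dmS (fun x => pdp P x k j) p)
        = (1/2 : ℂ) • ((Matrix.of fun i j => dd (1,0) (fun x => pdp P x i j) p)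
            + Complex.I • (Matrix.of fun i j => dd (0,1) (fun x => pdp P x i j) p)) := by
      ext k j
      simp [dmS, Matrix.smul_apply, Matrix.add_apply, smul_eq_mul]
    rw [hM]
    conv_rhs => rw [pdm]
    simp only [Phi_add, Phi_smul, Matrix.add_mul, Matrix.mul_add, smul_mul_assoc,
      mul_smul_comm, Phi_add, Phi_smul]
    ring
  have hFp' : dpS (fun q => Phi e (P q * pdm P q)) p
      = Phi e (pdp P p * pdm P p)
        + Phi e (P p * (Matrix.of fun k j => dpS (fun x => pdm P x k j) p)) := by
    show (1/2 : ℂ) * (dd (1,0) (fun q => Phi e (P q * pdm P q)) p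
        - Complex.I * dd (0,1) (fun q => Phi e (P q * pdm P q)) p) = _
    rw [dd_Phi_mul e P (pdm P) p (1,0) (hPd p) (hQmd p),
      dd_Phi_mul e P (pdm P) p (0,1) (hPd p) (hQmd p)]
    have e1 : (Matrix.of fun i j => dd (1,0) (fun x => P x i j) p) = pd1 P p := rfl
    have e2 : (Matrix.of fun i j => dd (0,1) (fun x => P x i j) p) = pd2 P p := rfl
    rw [e1, e2]
    have hM : (Matrix.of fun k j => dpS (fun x => pdm P x k j) p)
        = (1/2 : ℂ) • ((Matrix.of fun i j => dd (1,0) (fun x => pdm P x i j) p)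
            - Complex.I • (Matrix.of fun i j => dd (0,1) (fun x => pdm P x i j) p)) := by
      ext k j
      simp [dpS, Matrix.smul_apply, Matrix.sub_apply, smul_eq_mul]
    rw [hM]
    conv_rhs => rw [pdp]
    simp only [Phi_add, Phi_smul, Phi_sub, Matrix.sub_mul, Matrix.mul_sub, Matrix.add_mul,
      Matrix.mul_add, smul_mul_assoc, mul_smul_comm]
    ring
  -- quotient rule for the coefficients
  have hA' : dmS (fun q => sesq (P q) e (P q) (pdp P q)) p
      = (dmS (fun q => Phi e (P q * pdp P q)) p * Phi e (P p)
          - Phi e (P p * pdp P p) * dmS (fun q => Phi e (P q)) p) / Phi e (P p) ^ 2 := by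
    rw [coefP_fun_eq P e hherm]
    exact dmS_div (hFp p) (hsf p) (hs0 p)
  have hB' : dpS (fun q => sesq (P q) e (P q) (pdm P q)) p
      = (dpS (fun q => Phi e (P q * pdm P q)) p * Phi e (P p)
          - Phi e (P p * pdm P p) * dpS (fun q => Phi e (P q)) p) / Phi e (P p) ^ 2 := by
    rw [coefM_fun_eq P e hherm]
    exact dpS_div (hFm p) (hsf p) (hs0 p)
  -- conjugate-transpose facts
  have hQmH : (pdp P p)ᴴ = pdm P p := by
    ext i j
    rw [Matrix.conjTranspose_apply, pdp_apply, pdm_apply]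
    have h2 : (fun x => (starRingEnd ℂ) (P x j i)) = fun x => P x i j := by
      funext x
      rw [← Complex.star_def, ← Matrix.conjTranspose_apply, hherm x]
    rw [Complex.star_def, dpS_conj (hPd p j i), h2]
  have hQpH : (pdm P p)ᴴ = pdp P p := by
    rw [← hQmH, Matrix.conjTranspose_conjTranspose]
  have hconjs : (starRingEnd ℂ) (Phi e (P p)) = Phi e (P p) := by
    rw [Phi_conj, hherm p]
  have hconjfp : (starRingEnd ℂ) (Phi e (P p * pdp P p)) = Phi e (pdm P p * P p) := by
    rw [Phi_conj, Matrix.conjTranspose_mul, hherm p, hQmH]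
  have hconjfm : (starRingEnd ℂ) (Phi e (P p * pdm P p)) = Phi e (pdp P p * P p) := by
    rw [Phi_conj, Matrix.conjTranspose_mul, hherm p, hQpH]
  -- idempotency split
  have hsplit_p : pdp P p = pdp P p * P p + P p * pdp P p := by
    ext i j
    simp only [Matrix.add_apply, Matrix.mul_apply, pdp_apply]
    have hfun : (fun x => P x i j) = fun x => ∑ k, P x i k * P x k j := by
      funext x
      conv_lhs => rw [← hidem x]
      rw [Matrix.mul_apply]
    rw [hfun, dpS_sum (fun k _ => (hPd p i k).fun_mul (hPd p k j)),
      Finset.sum_congr rfl (fun k _ => dpS_mul (hPd p i k) (hPd p k j)),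
      Finset.sum_add_distrib, add_comm]
    congr 1
    exact Finset.sum_congr rfl fun k _ => mul_comm _ _
  have hsplit_m : pdm P p = pdm P p * P p + P p * pdm P p := by
    ext i j
    simp only [Matrix.add_apply, Matrix.mul_apply, pdm_apply]
    have hfun : (fun x => P x i j) = fun x => ∑ k, P x i k * P x k j := by
      funext x
      conv_lhs => rw [← hidem x]
      rw [Matrix.mul_apply]
    rw [hfun, dmS_sum (fun k _ => (hPd p i k).fun_mul (hPd p k j)),
      Finset.sum_congr rfl (fun k _ => dmS_mul (hPd p i k) (hPd p k j)),
      Finset.sum_add_distrib, add_comm]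
    congr 1
    exact Finset.sum_congr rfl fun k _ => mul_comm _ _
  have hgp : Phi e (pdp P p) = Phi e (pdp P p * P p) + Phi e (P p * pdp P p) := by
    conv_lhs => rw [hsplit_p]
    rw [Phi_add]
  have hgm : Phi e (pdm P p) = Phi e (pdm P p * P p) + Phi e (P p * pdm P p) := by
    conv_lhs => rw [hsplit_m]
    rw [Phi_add]
  -- the sesquilinear norms on the right-hand side
  have hs1 : sesq (P p) e (Dp P e P p) (Dp P e P p)
      = (Phi e (pdm P p * pdp P p)
          - (Phi e (P p * pdp P p) / Phi e (P p)) * Phi e (pdm P p * P p)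
          - (Phi e (pdm P p * P p) / Phi e (P p)) * Phi e (P p * pdp P p)
          + (Phi e (pdm P p * P p) / Phi e (P p))
            * ((Phi e (P p * pdp P p) / Phi e (P p)) * Phi e (P p)))
        / Phi e (P p) := by
    have hDp : Dp P e P p = pdp P p - (Phi e (P p * pdp P p) / Phi e (P p)) • P p := by
      show pdp P p - sesq (P p) e (P p) (pdp P p) • P p = _
      rw [sesq, hherm p]; rfl
    show Phi e ((Dp P e P p)ᴴ * Dp P e P p) / Phi e (P p) = _
    rw [hDp, Matrix.conjTranspose_sub, Matrix.conjTranspose_smul, hherm p, hQmH,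
      Complex.star_def, map_div₀, hconjfp, hconjs]
    simp only [Matrix.sub_mul, Matrix.mul_sub, smul_mul_assoc, mul_smul_comm,
      Phi_sub, Phi_smul, smul_smul]
    rw [hidem p]
    ring
  have hs2 : sesq (P p) e (Dm P e P p) (Dm P e P p)
      = (Phi e (pdp P p * pdm P p)
          - (Phi e (P p * pdm P p) / Phi e (P p)) * Phi e (pdp P p * P p)
          - (Phi e (pdp P p * P p) / Phi e (P p)) * Phi e (P p * pdm P p)
          + (Phi e (pdp P p * P p) / Phi e (P p))
            * ((Phi e (P p * pdm P p) / Phi e (P p)) * Phi e (P p)))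
        / Phi e (P p) := by
    have hDm : Dm P e P p = pdm P p - (Phi e (P p * pdm P p) / Phi e (P p)) • P p := by
      show pdm P p - sesq (P p) e (P p) (pdm P p) • P p = _
      rw [sesq, hherm p]; rfl
    show Phi e ((Dm P e P p)ᴴ * Dm P e P p) / Phi e (P p) = _
    rw [hDm, Matrix.conjTranspose_sub, Matrix.conjTranspose_smul, hherm p, hQpH,
      Complex.star_def, map_div₀, hconjfm, hconjs]
    simp only [Matrix.sub_mul, Matrix.mul_sub, smul_mul_assoc, mul_smul_comm,
      Phi_sub, Phi_smul, smul_smul]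
    rw [hidem p]
    ring
  -- final assembly
  rw [hA', hB', hFm', hFp', hsm, hsp, hs1, hs2, hmixEq, hgp, hgm]
  have hs0p := hs0 p
  field_simp
  ring
/-- The commutator of the covariant derivatives:
`[D₊,D₋]X = (‖D₊P‖² − ‖D₋P‖²) • X`. -/
theorem covariant_deriv_commutator {N : ℕ}
    (P X : ℝ × ℝ → Matrix (Fin N) (Fin N) ℂ) (e : Fin N → ℂ)
    (hPdiff : ∀ i j, ContDiff ℝ 2 fun q => P q i j)
    (hXdiff : ∀ i j, ContDiff ℝ 2 fun q => X q i j)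
    (hidem : ∀ p, P p * P p = P p) (hherm : ∀ p, (P p)ᴴ = P p)
    (htr : ∀ p, Matrix.trace (P p) = 1) (he : ∀ p, (P p).mulVec e ≠ 0) :
    ∀ p : ℝ × ℝ,
      Dp P e (fun q => Dm P e X q) p - Dm P e (fun q => Dp P e X q) p =
        (sesq (P p) e (Dp P e P p) (Dp P e P p) -
          sesq (P p) e (Dm P e P p) (Dm P e P p)) • X p := by
  intro p
  have hXd : ∀ (q : ℝ × ℝ) (i j : Fin N), DifferentiableAt ℝ (fun x => X x i j) q :=
    fun q i j => ((hXdiff i j).differentiable (by norm_num)).differentiableAt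
  have hcP := hcPD P e hPdiff hidem hherm he
  have hcM := hcMD P e hPdiff hidem hherm he
  have key := key_lemma P e hPdiff hidem hherm he p
  have hDp_entry : ∀ (Y : ℝ × ℝ → Matrix (Fin N) (Fin N) ℂ) (q : ℝ × ℝ) (i j : Fin N),
      Dp P e Y q i j = dpS (fun x => Y x i j) q
        - sesq (P q) e (P q) (pdp P q) * Y q i j := by
    intro Y q i j
    show (pdp Y q - sesq (P q) e (P q) (pdp P q) • Y q) i j = _
    rw [Matrix.sub_apply, Matrix.smul_apply, smul_eq_mul, pdp_apply]
  have hDm_entry : ∀ (Y : ℝ × ℝ → Matrix (Fin N) (Fin N) ℂ) (q : ℝ × ℝ) (i j : Fin N),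
      Dm P e Y q i j = dmS (fun x => Y x i j) q
        - sesq (P q) e (P q) (pdm P q) * Y q i j := by
    intro Y q i j
    show (pdm Y q - sesq (P q) e (P q) (pdm P q) • Y q) i j = _
    rw [Matrix.sub_apply, Matrix.smul_apply, smul_eq_mul, pdm_apply]
  ext i j
  rw [Matrix.sub_apply, Matrix.smul_apply, smul_eq_mul]
  rw [hDp_entry (fun q => Dm P e X q) p i j, hDm_entry (fun q => Dp P e X q) p i j,
    hDm_entry X p i j, hDp_entry X p i j]
  have hfm : (fun x => Dm P e X x i j)
      = fun x => dmS (fun y => X y i j) x - sesq (P x) e (P x) (pdm P x) * X x i j :=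
    funext fun x => hDm_entry X x i j
  have hfp : (fun x => Dp P e X x i j)
      = fun x => dpS (fun y => X y i j) x - sesq (P x) e (P x) (pdp P x) * X x i j :=
    funext fun x => hDp_entry X x i j
  rw [hfm, hfp,
    dpS_sub (diff_dmS (hXdiff i j) p) ((hcM p).fun_mul (hXd p i j)),
    dmS_sub (diff_dpS (hXdiff i j) p) ((hcP p).fun_mul (hXd p i j)),
    dpS_mul (hcM p) (hXd p i j), dmS_mul (hcP p) (hXd p i j),
    dpS_dmS_comm (hXdiff i j) p]
  linear_combination (X p i j) * key
end

section
/- Let X be a differentiable family of Hermitian rank-1 projectors with raising/lowering operators Π±X = ((∂±X)·X·(∂∓X))/tr((∂±X)·X·(∂∓X)) (or 0 if the numerator vanishes). Then Π±X is again a Hermitian idempotent matrix, it projects onto the vector (∂±X)·X·e, and X·(Π±X) = 0, i.e., X and Π±X are orthogonal projectors. -/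
open Matrix

/-- The raising operator `Π₊X`. -/
noncomputable def Pip {N : ℕ} (X : ℝ × ℝ → Matrix (Fin N) (Fin N) ℂ) (p : ℝ × ℝ) :
    Matrix (Fin N) (Fin N) ℂ :=
  if Matrix.trace (pdp X p * X p * pdm X p) = 0 then 0
  else (Matrix.trace (pdp X p * X p * pdm X p))⁻¹ • (pdp X p * X p * pdm X p)

/-- The lowering operator `Π₋X`. -/
noncomputable def Pim {N : ℕ} (X : ℝ × ℝ → Matrix (Fin N) (Fin N) ℂ) (p : ℝ × ℝ) :
    Matrix (Fin N) (Fin N) ℂ :=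
  if Matrix.trace (pdm X p * X p * pdp X p) = 0 then 0
  else (Matrix.trace (pdm X p * X p * pdp X p))⁻¹ • (pdm X p * X p * pdp X p)

lemma rank_one_fac {N : ℕ} (Y : Matrix (Fin N) (Fin N) ℂ)
    (hidem : Y * Y = Y) (hherm : Yᴴ = Y) (htr : Matrix.trace Y = 1) :
    ∃ u w : Fin N → ℂ, (∀ i j, Y i j = u i * w j) ∧ w ⬝ᵥ u = 1 := by
  have hm : ∀ a b, ∑ k, Y a k * Y k b = Y a b := by
    intro a b
    conv_rhs => rw [← hidem, Matrix.mul_apply]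
  have hc : ∀ a b, (starRingEnd ℂ) (Y a b) = Y b a := by
    intro a b
    have := Matrix.ext_iff.2 hherm b a
    rwa [Matrix.conjTranspose_apply] at this
  have htr' : ∑ j, Y j j = 1 := by
    rw [← htr]; rfl
  obtain ⟨i₀, -, hd⟩ := Finset.exists_ne_zero_of_sum_ne_zero (by rw [htr']; exact one_ne_zero)
  set d : ℂ := Y i₀ i₀ with hdd
  set s : Fin N → Fin N → ℂ := fun j k => d * Y j k - Y j i₀ * Y i₀ k with hs
  have hszero : ∀ j k, s j k = 0 := by
    have hsum : ∑ j, ∑ k, s j k * (starRingEnd ℂ) (s j k) = 0 := by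
      have inner : ∀ j, ∑ k, s j k * (starRingEnd ℂ) (s j k)
          = d * d * Y j j - d * (Y j i₀ * Y i₀ j) := by
        intro j
        have hterm : ∀ k, s j k * (starRingEnd ℂ) (s j k)
            = d * d * (Y j k * Y k j) - d * Y i₀ j * (Y j k * Y k i₀)
              - d * Y j i₀ * (Y i₀ k * Y k j) + Y j i₀ * Y i₀ j * (Y i₀ k * Y k i₀) := by
          intro k
          have hconj : (starRingEnd ℂ) (s j k) = d * Y k j - Y i₀ j * Y k i₀ := by
            simp only [hs, hdd, map_sub, _root_.map_mul, hc]
          rw [hconj]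
          simp only [hs]
          ring
        calc ∑ k, s j k * (starRingEnd ℂ) (s j k)
            = ∑ k, (d * d * (Y j k * Y k j) - d * Y i₀ j * (Y j k * Y k i₀)
              - d * Y j i₀ * (Y i₀ k * Y k j) + Y j i₀ * Y i₀ j * (Y i₀ k * Y k i₀)) :=
              Finset.sum_congr rfl fun k _ => hterm k
          _ = d * d * (∑ k, Y j k * Y k j) - d * Y i₀ j * (∑ k, Y j k * Y k i₀)
              - d * Y j i₀ * (∑ k, Y i₀ k * Y k j) + Y j i₀ * Y i₀ j * (∑ k, Y i₀ k * Y k i₀) := by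
              simp only [Finset.sum_add_distrib, Finset.sum_sub_distrib, Finset.mul_sum]
          _ = d * d * Y j j - d * (Y j i₀ * Y i₀ j) := by
              rw [hm, hm, hm, hm]; ring
      calc ∑ j, ∑ k, s j k * (starRingEnd ℂ) (s j k)
          = ∑ j, (d * d * Y j j - d * (Y j i₀ * Y i₀ j)) := Finset.sum_congr rfl fun j _ => inner j
        _ = d * d * (∑ j, Y j j) - d * (∑ j, Y j i₀ * Y i₀ j) := by
            simp only [Finset.sum_sub_distrib, Finset.mul_sum]
        _ = 0 := by
            have h4 : ∑ j, Y j i₀ * Y i₀ j = d := by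
              rw [hdd, ← hm i₀ i₀]
              exact Finset.sum_congr rfl fun j _ => mul_comm _ _
            rw [htr', h4]; ring
    have hreal : ∑ j, ∑ k, Complex.normSq (s j k) = 0 := by
      have hcast : ((∑ j, ∑ k, Complex.normSq (s j k) : ℝ) : ℂ) = 0 := by
        push_cast
        simp only [← Complex.mul_conj]
        exact hsum
      exact_mod_cast hcast
    intro j k
    have h1 : ∀ j ∈ Finset.univ, (0:ℝ) ≤ ∑ k, Complex.normSq (s j k) :=
      fun j _ => Finset.sum_nonneg fun k _ => Complex.normSq_nonneg _
    have h2 := (Finset.sum_eq_zero_iff_of_nonneg h1).1 hreal j (Finset.mem_univ j)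
    have h3 := (Finset.sum_eq_zero_iff_of_nonneg
      (fun k _ => Complex.normSq_nonneg (s j k))).1 h2 k (Finset.mem_univ k)
    exact Complex.normSq_eq_zero.1 h3
  refine ⟨fun j => Y j i₀, fun k => Y i₀ k / d, fun i j => ?_, ?_⟩
  · have h5 := hszero i j
    simp only [hs] at h5
    field_simp
    linear_combination h5
  · have h6 : (fun k => Y i₀ k / d) ⬝ᵥ (fun j => Y j i₀) = (∑ k, Y i₀ k * Y k i₀) / d := by
      simp [dotProduct, Finset.sum_div, div_mul_eq_mul_div]
    rw [h6, hm]
    exact div_self hd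

lemma mul_outer {N : ℕ} (C : Matrix (Fin N) (Fin N) ℂ) (u w : Fin N → ℂ) :
    C * vecMulVec u w = vecMulVec (C.mulVec u) w := by
  ext i j
  simp only [Matrix.mul_apply, vecMulVec_apply, Matrix.mulVec, dotProduct]
  rw [Finset.sum_mul]
  exact Finset.sum_congr rfl fun k _ => by ring

lemma outer_mul {N : ℕ} (C : Matrix (Fin N) (Fin N) ℂ) (u w : Fin N → ℂ) :
    vecMulVec u w * C = vecMulVec u (w ᵥ* C) := by
  ext i j
  simp only [Matrix.mul_apply, vecMulVec_apply, Matrix.vecMul, dotProduct]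
  rw [Finset.mul_sum]
  exact Finset.sum_congr rfl fun k _ => by ring

lemma outer_mul_outer {N : ℕ} (a b u w : Fin N → ℂ) :
    vecMulVec a b * vecMulVec u w = (b ⬝ᵥ u) • vecMulVec a w := by
  ext i j
  simp only [Matrix.mul_apply, vecMulVec_apply, Matrix.smul_apply, dotProduct,
    smul_eq_mul, Finset.sum_mul]
  exact Finset.sum_congr rfl fun k _ => by ring

lemma outer_mulVec {N : ℕ} (u w x : Fin N → ℂ) :
    (vecMulVec u w).mulVec x = (w ⬝ᵥ x) • u := by
  ext i
  simp only [Matrix.mulVec, vecMulVec_apply, dotProduct, Pi.smul_apply, smul_eq_mul]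
  rw [Finset.sum_mul]
  exact Finset.sum_congr rfl fun k _ => by ring

lemma outer_trace {N : ℕ} (u w : Fin N → ℂ) :
    Matrix.trace (vecMulVec u w) = u ⬝ᵥ w := rfl

lemma core {N : ℕ} (Y A B P : Matrix (Fin N) (Fin N) ℂ) (e : Fin N → ℂ)
    (hidem : Y * Y = Y) (hherm : Yᴴ = Y) (htr : Matrix.trace Y = 1)
    (hAH : Aᴴ = B) (hBH : Bᴴ = A)
    (hA : A * Y + Y * A = A)
    (hP : P = if Matrix.trace (A * Y * B) = 0 then 0
      else (Matrix.trace (A * Y * B))⁻¹ • (A * Y * B)) :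
    P * P = P ∧ Pᴴ = P ∧ Y * P = 0 ∧
      ((A * Y).mulVec e ≠ 0 → ∀ v : Fin N → ℂ, ∃ k : ℂ, P.mulVec v = k • (A * Y).mulVec e) := by
  obtain ⟨u, w, hfac, hwu⟩ := rank_one_fac Y hidem hherm htr
  have Yeq : Y = vecMulVec u w := by
    ext i j; rw [vecMulVec_apply]; exact hfac i j
  set M := A * Y * B with hM
  set t := Matrix.trace M with ht
  have hYAY : Y * (A * Y) = 0 := by
    have h1 : Y * (A * Y) + Y * (Y * A) = Y * A := by rw [← Matrix.mul_add, hA]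
    have h2 : Y * (Y * A) = Y * A := by rw [← Matrix.mul_assoc, hidem]
    rw [h2] at h1
    exact add_eq_right.mp h1
  have hYCY : Y * (B * A) * Y = t • Y := by
    rw [Yeq, outer_mul, outer_mul_outer]
    congr 1
    rw [ht, hM, Matrix.trace_mul_comm (A * Y) B, ← Matrix.mul_assoc, Matrix.trace_mul_comm,
      Yeq, outer_mul, outer_trace]
    exact dotProduct_comm _ _
  have hMM : M * M = t • M := by
    have h3 : M * M = A * (Y * (B * A) * Y) * B := by
      simp only [hM, Matrix.mul_assoc]
    rw [h3, hYCY]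
    simp only [Matrix.smul_mul, Matrix.mul_smul, hM, Matrix.mul_assoc]
  have hMH : Mᴴ = M := by
    rw [hM, Matrix.conjTranspose_mul, Matrix.conjTranspose_mul, hBH, hherm, hAH,
      Matrix.mul_assoc]
  have htconj : (starRingEnd ℂ) t = t := by
    rw [ht, starRingEnd_apply, ← Matrix.trace_conjTranspose, hMH]
  by_cases h0 : t = 0
  · have hP0 : P = 0 := by rw [hP, if_pos h0]
    exact ⟨by rw [hP0]; simp, by rw [hP0]; simp, by rw [hP0]; simp,
      fun _ v => ⟨(0:ℂ), by rw [hP0]; simp⟩⟩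
  · have hPdef : P = t⁻¹ • M := by rw [hP, if_neg h0]
    refine ⟨?_, ?_, ?_, ?_⟩
    · rw [hPdef, Matrix.smul_mul, Matrix.mul_smul, hMM, smul_smul, smul_smul]
      congr 1
      field_simp
    · rw [hPdef, Matrix.conjTranspose_smul, hMH, star_inv₀, show star t = t from htconj]
    · rw [hPdef, Matrix.mul_smul, hM, ← Matrix.mul_assoc, hYAY]
      simp
    · intro hne v
      have hAYe : (A * Y).mulVec e = (w ⬝ᵥ e) • A.mulVec u := by
        rw [← Matrix.mulVec_mulVec, Yeq, outer_mulVec, Matrix.mulVec_smul]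
      have hwe : w ⬝ᵥ e ≠ 0 := fun hz => hne (by rw [hAYe, hz, zero_smul])
      refine ⟨t⁻¹ * (w ⬝ᵥ B.mulVec v) / (w ⬝ᵥ e), ?_⟩
      have hMv : M.mulVec v = (w ⬝ᵥ B.mulVec v) • A.mulVec u := by
        rw [hM, ← Matrix.mulVec_mulVec, ← Matrix.mulVec_mulVec, Yeq, outer_mulVec,
          Matrix.mulVec_smul]
      rw [hPdef, Matrix.smul_mulVec, hMv, hAYe, smul_smul, smul_smul]
      congr 1
      field_simp

lemma leibniz {N : ℕ} (X : ℝ × ℝ → Matrix (Fin N) (Fin N) ℂ)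
    (hdiff : ∀ i j, Differentiable ℝ fun q => X q i j)
    (hidem : ∀ p, X p * X p = X p) (p : ℝ × ℝ) (vdir : ℝ × ℝ) :
    (Matrix.of fun i j => fderiv ℝ (fun q => X q i j) p vdir) * X p
      + X p * (Matrix.of fun i j => fderiv ℝ (fun q => X q i j) p vdir)
      = Matrix.of fun i j => fderiv ℝ (fun q => X q i j) p vdir := by
  ext i j
  have hrw : (fun q => X q i j) = fun q => ∑ k, X q i k * X q k j := by
    funext q
    conv_lhs => rw [← hidem q]
    rw [Matrix.mul_apply]
  have h1 : fderiv ℝ (fun q => X q i j) p vdir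
      = ∑ k, (X p i k * fderiv ℝ (fun q => X q k j) p vdir
            + X p k j * fderiv ℝ (fun q => X q i k) p vdir) := by
    conv_lhs => rw [hrw]
    rw [fderiv_fun_sum (A := fun k q => X q i k * X q k j) (fun k _ => ((hdiff i k) p).mul ((hdiff k j) p)),
      ContinuousLinearMap.sum_apply]
    refine Finset.sum_congr rfl fun k _ => ?_
    rw [fderiv_fun_mul ((hdiff i k) p) ((hdiff k j) p)]
    simp
  simp only [Matrix.add_apply, Matrix.mul_apply, Matrix.of_apply]
  rw [h1, ← Finset.sum_add_distrib]
  exact Finset.sum_congr rfl fun k _ => by ring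

lemma pd_herm {N : ℕ} (X : ℝ × ℝ → Matrix (Fin N) (Fin N) ℂ)
    (hherm : ∀ p, (X p)ᴴ = X p) (p : ℝ × ℝ) (vdir : ℝ × ℝ) :
    (Matrix.of fun i j => fderiv ℝ (fun q => X q i j) p vdir)ᴴ
      = Matrix.of fun i j => fderiv ℝ (fun q => X q i j) p vdir := by
  ext i j
  rw [Matrix.conjTranspose_apply, Matrix.of_apply, Matrix.of_apply]
  have hf : (fun q => X q i j) = fun q => Complex.conjCLE (X q j i) := by
    funext q
    have h := Matrix.ext_iff.2 (hherm q) i j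
    rw [Matrix.conjTranspose_apply] at h
    simp only [Complex.conjCLE_apply]
    exact h.symm
  have hcomp := Complex.conjCLE.comp_fderiv (f := fun q => X q j i) (x := p)
  simp only [Function.comp_def] at hcomp
  rw [hf, hcomp]
  simp

/-- For a differentiable family of Hermitian rank-1 projectors `X`, the operators `Π±X`
are Hermitian idempotent matrices, project onto the vector `(∂±X)·X·e` (when this vector
is nonzero), and are orthogonal to `X`: `X · (Π±X) = 0`. -/
theorem raising_lowering_projector {N : ℕ} (X : ℝ × ℝ → Matrix (Fin N) (Fin N) ℂ)
    (e : Fin N → ℂ)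
    (hdiff : ∀ i j, Differentiable ℝ fun q => X q i j)
    (hidem : ∀ p, X p * X p = X p) (hherm : ∀ p, (X p)ᴴ = X p)
    (htr : ∀ p, Matrix.trace (X p) = 1) :
    ∀ p : ℝ × ℝ,
      (Pip X p * Pip X p = Pip X p ∧ (Pip X p)ᴴ = Pip X p ∧ X p * Pip X p = 0 ∧
        ((pdp X p * X p).mulVec e ≠ 0 →
          ∀ v : Fin N → ℂ, ∃ k : ℂ, (Pip X p).mulVec v = k • (pdp X p * X p).mulVec e)) ∧
      (Pim X p * Pim X p = Pim X p ∧ (Pim X p)ᴴ = Pim X p ∧ X p * Pim X p = 0 ∧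
        ((pdm X p * X p).mulVec e ≠ 0 →
          ∀ v : Fin N → ℂ, ∃ k : ℂ, (Pim X p).mulVec v = k • (pdm X p * X p).mulVec e)) := by
  intro p
  have hD1 : pd1 X p * X p + X p * pd1 X p = pd1 X p := leibniz X hdiff hidem p (1, 0)
  have hD2 : pd2 X p * X p + X p * pd2 X p = pd2 X p := leibniz X hdiff hidem p (0, 1)
  have h1 : (pd1 X p)ᴴ = pd1 X p := pd_herm X hherm p (1, 0)
  have h2 : (pd2 X p)ᴴ = pd2 X p := pd_herm X hherm p (0, 1)
  have hAp : pdp X p * X p + X p * pdp X p = pdp X p := by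
    have step : pdp X p * X p + X p * pdp X p
        = ((1:ℂ)/2) • ((pd1 X p * X p + X p * pd1 X p)
            - Complex.I • (pd2 X p * X p + X p * pd2 X p)) := by
      simp only [pdp, Matrix.smul_mul, Matrix.mul_smul, Matrix.sub_mul, Matrix.mul_sub]
      module
    rw [step, hD1, hD2]
    rfl
  have hAm : pdm X p * X p + X p * pdm X p = pdm X p := by
    have step : pdm X p * X p + X p * pdm X p
        = ((1:ℂ)/2) • ((pd1 X p * X p + X p * pd1 X p)
            + Complex.I • (pd2 X p * X p + X p * pd2 X p)) := by
      simp only [pdm, Matrix.smul_mul, Matrix.mul_smul, Matrix.add_mul, Matrix.mul_add]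
      module
    rw [step, hD1, hD2]
    rfl
  have hermp : (pdp X p)ᴴ = pdm X p := by
    simp only [pdp, pdm]
    rw [Matrix.conjTranspose_smul, Matrix.conjTranspose_sub, Matrix.conjTranspose_smul,
      h1, h2]
    simp only [Complex.star_def, Complex.conj_I, map_div₀, _root_.map_one, map_ofNat]
    rw [neg_smul, sub_neg_eq_add]
  have hermm : (pdm X p)ᴴ = pdp X p := by
    simp only [pdp, pdm]
    rw [Matrix.conjTranspose_smul, Matrix.conjTranspose_add, Matrix.conjTranspose_smul,
      h1, h2]
    simp only [Complex.star_def, Complex.conj_I, map_div₀, _root_.map_one, map_ofNat]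
    rw [neg_smul, ← sub_eq_add_neg]
  exact ⟨core (X p) (pdp X p) (pdm X p) (Pip X p) e (hidem p) (hherm p) (htr p)
      hermp hermm hAp rfl,
    core (X p) (pdm X p) (pdp X p) (Pim X p) e (hidem p) (hherm p) (htr p)
      hermm hermp hAm rfl⟩
end
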